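/- Suppose o = {o₁,…,o_{n+1}} with o₁ < … < o_{n+1} and there exists π ∈ 𝒫 with (o \ {o_{n+1}})^π < o \ {o_{n+1}}. Then o^π < o; i.e., non-canonicity of the parent set implies non-canonicity of the set. -/

import Mathlib

/-- Objects built inductively from atoms by finite tuples and finite sets
(a set node carries the list of its elements). -/
inductive Obj (A : Type) : Type
  | atom : A → Obj A
  | tup  : List (Obj A) → Obj A
  | sett : List (Obj A) → Obj A

/-- Applying a map on atoms to an object, recursively. -/
def Obj.applyPerm {A : Type} (π : A → A) : Obj A → Obj A
  | .atom a => .atom (π a)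
  | .tup l => .tup (l.attach.map (fun o => Obj.applyPerm π o.1))
  | .sett l => .sett (l.attach.map (fun o => Obj.applyPerm π o.1))
decreasing_by all_goals (have := List.sizeOf_lt_of_mem o.2; simp at this ⊢; omega)

/-- The list of atoms occurring in an object. -/
def Obj.atomsList {A : Type} : Obj A → List A
  | .atom a => [a]
  | .tup l => l.attach.flatMap (fun o => Obj.atomsList o.1)
  | .sett l => l.attach.flatMap (fun o => Obj.atomsList o.1)
decreasing_by all_goals (have := List.sizeOf_lt_of_mem o.2; simp at this ⊢; omega)

/-- The set of atoms occurring in an object. -/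
def Obj.atoms {A : Type} (o : Obj A) : Set A := {a | a ∈ o.atomsList}

/-- Well-formed objects: the element lists of set nodes are strictly sorted
(so they faithfully represent finite sets, listed in increasing order). -/
def Obj.WF {A : Type} [LinearOrder (Obj A)] : Obj A → Prop
  | .atom _ => True
  | .tup l => ∀ o ∈ l, Obj.WF o
  | .sett l => l.Pairwise (· < ·) ∧ ∀ o ∈ l, Obj.WF o

/-- Applying a map on atoms to an object, recursively; the element list of a
set node is re-sorted, so that set nodes keep representing sets. -/
def Obj.applyPermS {A : Type} [LinearOrder (Obj A)] (π : A → A) : Obj A → Obj A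
  | .atom a => .atom (π a)
  | .tup l => .tup (l.attach.map (fun o => Obj.applyPermS π o.1))
  | .sett l => .sett ((l.attach.map (fun o => Obj.applyPermS π o.1)).mergeSort
      (fun a b => decide (a ≤ b)))
decreasing_by all_goals (have := List.sizeOf_lt_of_mem o.2; simp at this ⊢; omega)

section Aux
variable {A : Type} [LinearOrder (Obj A)]

lemma applyPermS_tup (π : A → A) (m : List (Obj A)) :
    Obj.applyPermS π (Obj.tup m) = Obj.tup (m.map (Obj.applyPermS π)) := by
  rw [Obj.applyPermS]
  simp

lemma applyPermS_sett (π : A → A) (m : List (Obj A)) :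
    Obj.applyPermS π (Obj.sett m)
      = Obj.sett ((m.map (Obj.applyPermS π)).mergeSort (fun a b => decide (a ≤ b))) := by
  rw [Obj.applyPermS]
  simp

lemma applyPermS_symm_aux (π : Equiv.Perm A) :
    ∀ n, ∀ o : Obj A, sizeOf o ≤ n → o.WF →
      Obj.applyPermS (⇑π.symm) (Obj.applyPermS (⇑π) o) = o := by
  intro n
  induction n with
  | zero => intro o ho; cases o <;> simp at ho
  | succ n ih =>
    intro o ho hwf
    cases o with
    | atom a => simp [Obj.applyPermS]
    | tup m =>
      rw [Obj.WF] at hwf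
      have hm : ∀ o ∈ m, Obj.applyPermS (⇑π.symm) (Obj.applyPermS (⇑π) o) = o := by
        intro o hmem
        have h1 := List.sizeOf_lt_of_mem hmem
        have h2 : sizeOf (Obj.tup m) = 1 + sizeOf m := by simp
        exact ih o (by omega) (hwf o hmem)
      rw [applyPermS_tup, applyPermS_tup, List.map_map]
      congr 1
      calc m.map (Obj.applyPermS ⇑π.symm ∘ Obj.applyPermS ⇑π)
          = m.map id := List.map_congr_left hm
        _ = m := List.map_id m
    | sett m =>
      rw [Obj.WF] at hwf
      have hm : ∀ o ∈ m, Obj.applyPermS (⇑π.symm) (Obj.applyPermS (⇑π) o) = o := by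
        intro o hmem
        have h1 := List.sizeOf_lt_of_mem hmem
        have h2 : sizeOf (Obj.sett m) = 1 + sizeOf m := by simp
        exact ih o (by omega) (hwf.2 o hmem)
      rw [applyPermS_sett, applyPermS_sett]
      congr 1
      have hperm : List.Perm ((((m.map (Obj.applyPermS ⇑π)).mergeSort (fun a b => decide (a ≤ b))).map
          (Obj.applyPermS ⇑π.symm)).mergeSort (fun a b => decide (a ≤ b))) m := by
        refine (List.mergeSort_perm _ _).trans ?_
        refine ((List.mergeSort_perm _ _).map _).trans ?_
        rw [List.map_map]
        rw [show m.map (Obj.applyPermS ⇑π.symm ∘ Obj.applyPermS ⇑π) = m from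
          (List.map_congr_left hm).trans (List.map_id m)]
      refine List.Perm.eq_of_pairwise' (r := (· ≤ ·)) (List.pairwise_mergeSort' _ _) ?_ hperm
      exact hwf.1.imp le_of_lt

lemma applyPermS_symm (π : Equiv.Perm A) (o : Obj A) (hwf : o.WF) :
    Obj.applyPermS (⇑π.symm) (Obj.applyPermS (⇑π) o) = o :=
  applyPermS_symm_aux π (sizeOf o) o le_rfl hwf

lemma applyPermS_inj (π : Equiv.Perm A) {a b : Obj A} (ha : a.WF) (hb : b.WF)
    (h : Obj.applyPermS (⇑π) a = Obj.applyPermS (⇑π) b) : a = b := by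
  rw [← applyPermS_symm π a ha, ← applyPermS_symm π b hb, h]

lemma lex_orderedInsert {y z : Obj A} :
    ∀ {L l : List (Obj A)}, List.Lex (· < ·) L l → L.length = l.length → y ∉ L →
      List.Lex (· < ·) (L.orderedInsert (· ≤ ·) y) (l ++ [z]) := by
  intro L l h
  induction h with
  | nil => intro hlen; simp at hlen
  | @rel a L₁ b l₁ hab =>
    intro _ _
    by_cases hy : y ≤ a
    · rw [List.orderedInsert_cons_of_le _ _ hy]
      exact List.Lex.rel (lt_of_le_of_lt hy hab)
    · simp only [List.orderedInsert, if_neg hy]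
      exact List.Lex.rel hab
  | @cons a L₁ l₁ h ih =>
    intro hlen hy
    by_cases hya : y ≤ a
    · rw [List.orderedInsert_cons_of_le _ _ hya]
      refine List.Lex.rel (lt_of_le_of_ne hya ?_)
      intro he; exact hy (he ▸ List.mem_cons_self (a := a) (l := L₁))
    · simp only [List.orderedInsert, if_neg hya, List.cons_append]
      exact List.Lex.cons (ih (by simpa using hlen) (fun hm => hy (List.mem_cons_of_mem a hm)))

end Aux

/-- let o = {o₁,…,o_{n+1}} with o₁ < … < o_{n+1} (so the set node
lists its elements in increasing order and the last one is the maximum). If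
π ∈ 𝒫 makes the parent set o \ {o_{n+1}} strictly smaller, then o^π < o: a
non-canonical parent set implies a non-canonical set. -/
theorem set_noncanonical_of_parent {A : Type} [LinearOrder A] [LinearOrder (Obj A)] [WellFoundedLT (Obj A)]
    (hatom : ∀ a b : A, Obj.atom a < Obj.atom b ↔ a < b)
    (htup : ∀ l₁ l₂ : List (Obj A), l₁.length = l₂.length →
        (Obj.tup l₁ < Obj.tup l₂ ↔ List.Lex (· < ·) l₁ l₂))
    (hsett : ∀ l₁ l₂ : List (Obj A), l₁.Pairwise (· < ·) → l₂.Pairwise (· < ·) →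
        (Obj.sett l₁ < Obj.sett l₂ ↔ List.Lex (· < ·) l₁ l₂))
    (uset : A → Set A) (h1 : ∀ a, a ∈ uset a)
    (h2 : ∀ a b, uset a = uset b ∨ uset a ∩ uset b = ∅)
    (l : List (Obj A)) (x : Obj A) (hwf : (Obj.sett (l ++ [x])).WF)
    (π : Equiv.Perm A) (hπ : ∀ a, π a ∈ uset a)
    (hlt : (Obj.sett l).applyPermS π < Obj.sett l) :
    (Obj.sett (l ++ [x])).applyPermS π < Obj.sett (l ++ [x]) := by
  rw [Obj.WF] at hwf
  obtain ⟨hsl, hwfall⟩ := hwf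
  obtain ⟨hl_sorted, -, hlx⟩ := List.pairwise_append.mp hsl
  have hxgt : ∀ o ∈ l, o < x := fun o ho => hlx o ho x (List.mem_singleton_self x)
  have hxnotmem : x ∉ l := fun hx => lt_irrefl x (hxgt x hx)
  rw [show (Obj.sett l).applyPermS ⇑π = Obj.applyPermS ⇑π (Obj.sett l) from rfl,
    applyPermS_sett] at hlt
  rw [show (Obj.sett (l ++ [x])).applyPermS ⇑π = Obj.applyPermS ⇑π (Obj.sett (l ++ [x])) from rfl,
    applyPermS_sett]
  set f := Obj.applyPermS (⇑π) with hf
  set L := (l.map f).mergeSort (fun a b => decide (a ≤ b)) with hL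
  have hLperm : L.Perm (l.map f) := List.mergeSort_perm _ _
  have hinj : ∀ a ∈ l ++ [x], ∀ b ∈ l ++ [x], f a = f b → a = b := fun a ha b hb h =>
    applyPermS_inj π (hwfall a ha) (hwfall b hb) h
  have hnodup_lx : (l ++ [x]).Nodup := hsl.nodup
  have hnodup_map : ((l ++ [x]).map f).Nodup := List.Nodup.map_on hinj hnodup_lx
  have hnodup_mapl : (l.map f).Nodup := by
    rw [List.map_append] at hnodup_map
    exact (List.nodup_append'.mp hnodup_map).1
  have hLnodup : L.Nodup := hLperm.nodup_iff.mpr hnodup_mapl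
  have hLsorted_le : L.Pairwise (· ≤ ·) := List.pairwise_mergeSort' _ _
  have hLsorted : L.Pairwise (· < ·) := (hLsorted_le.and hLnodup).imp fun h => lt_of_le_of_ne h.1 h.2
  have hlex : List.Lex (· < ·) L l := (hsett L l hLsorted hl_sorted).mp hlt
  have hlen : L.length = l.length := by rw [hLperm.length_eq, List.length_map]
  have hfx : f x ∉ L := by
    intro hmem
    rcases List.mem_map.mp (hLperm.mem_iff.mp hmem) with ⟨o, ho, heq⟩
    have hxo : x = o := hinj x (by simp) o (List.mem_append_left _ ho) heq.symm
    exact hxnotmem (hxo ▸ ho)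
  have key : List.Lex (· < ·) (L.orderedInsert (· ≤ ·) (f x)) (l ++ [x]) :=
    lex_orderedInsert hlex hlen hfx
  have hins : ((l ++ [x]).map f).mergeSort (fun a b => decide (a ≤ b))
      = L.orderedInsert (· ≤ ·) (f x) := by
    refine List.Perm.eq_of_pairwise' (r := (· ≤ ·)) (List.pairwise_mergeSort' _ _)
      (List.Pairwise.orderedInsert (f x) L hLsorted_le) ?_
    have hp : ((l ++ [x]).map f).Perm ((f x) :: L) := by
      rw [List.map_append, List.map_singleton]
      exact (List.perm_append_singleton _ _).trans (hLperm.symm.cons _)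
    exact (List.mergeSort_perm _ _).trans (hp.trans (List.perm_orderedInsert _ _ _).symm)
  have hL'sorted : (((l ++ [x]).map f).mergeSort (fun a b => decide (a ≤ b))).Pairwise (· < ·) := by
    refine ((List.pairwise_mergeSort' _ _).and ?_).imp fun h => lt_of_le_of_ne h.1 h.2
    exact (List.mergeSort_perm _ _).nodup_iff.mpr hnodup_map
  exact (hsett _ _ hL'sorted hsl).mpr (by rw [hins]; exact key)
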